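/- Let p, q : ℕ. On ℂ^p × ℂ^q define the hermitian form h((x,y),(x',y')) = ∑_i conj(x i) * x' i − ∑_j conj(y j) * y' j. Let A ∈ Matrix (Fin p) (Fin p) ℂ, B ∈ Matrix (Fin p) (Fin q) ℂ, C ∈ Matrix (Fin q) (Fin p) ℂ, D ∈ Matrix (Fin q) (Fin q) ℂ, and suppose the block matrix g = fromBlocks A B C D satisfies g * H * gᴴ = H, where H is the diagonal matrix with first p entries 1 and last q entries −1 (i.e. g preserves h). Let Z ∈ Matrix (Fin p) (Fin q) ℂ with 1 − Zᴴ * Z positive definite. Then C * Z + D is invertible, the image of W_Z = {(Z *ᵥ w, w)} under the map (x,y) ↦ (A *ᵥ x + B *ᵥ y, C *ᵥ x + D *ᵥ y) equals W_{Z'} for Z' = (A * Z + B) * (C * Z + D)⁻¹, and 1 − Z'ᴴ * Z' is positive definite. -/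

import Mathlib

open Matrix
open scoped ComplexOrder

private lemma posdef_conj {n m : ℕ} {P : Matrix (Fin n) (Fin n) ℂ}
    (hP : P.PosDef) {M : Matrix (Fin n) (Fin m) ℂ} (hM : Function.Injective (M.mulVec)) :
    (Mᴴ * P * M).PosDef := by
  refine Matrix.PosDef.of_dotProduct_mulVec_pos ?_ (fun x hx => ?_)
  · have := hP.isHermitian
    unfold Matrix.IsHermitian at *
    rw [conjTranspose_mul, conjTranspose_mul, conjTranspose_conjTranspose, this,
      Matrix.mul_assoc]
  · have hMx : M *ᵥ x ≠ 0 := by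
      intro h0
      exact hx (hM (by simpa using h0))
    have := hP.dotProduct_mulVec_pos hMx
    calc (0:ℂ) < star (M *ᵥ x) ⬝ᵥ P *ᵥ (M *ᵥ x) := this
      _ = star x ⬝ᵥ (Mᴴ * P * M) *ᵥ x := by
        rw [show (Mᴴ * P * M) *ᵥ x = Mᴴ *ᵥ (P *ᵥ (M *ᵥ x)) by
              rw [← mulVec_mulVec, ← mulVec_mulVec],
            dotProduct_mulVec (star x) Mᴴ, ← star_mulVec]

/-- Linear fractional action of `U(p,q)` on the bounded symmetric domain
`{Z | 1 − Zᴴ Z ≫ 0}`: if `g = [[A,B],[C,D]]` preserves the hermitian form of signature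
`(p,q)` and `1 − Zᴴ Z` is positive definite, then `C Z + D` is invertible, `g` maps the
graph `W_Z` to `W_{Z'}` with `Z' = (A Z + B)(C Z + D)⁻¹`, and `1 − Z'ᴴ Z'` is positive
definite. -/
theorem stmt_6 (p q : ℕ)
    (h : ((Fin p → ℂ) × (Fin q → ℂ)) → ((Fin p → ℂ) × (Fin q → ℂ)) → ℂ)
    (hh : ∀ v v', h v v' =
      (∑ i, starRingEnd ℂ (v.1 i) * v'.1 i) - ∑ j, starRingEnd ℂ (v.2 j) * v'.2 j)
    (A : Matrix (Fin p) (Fin p) ℂ) (B : Matrix (Fin p) (Fin q) ℂ)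
    (C : Matrix (Fin q) (Fin p) ℂ) (D : Matrix (Fin q) (Fin q) ℂ)
    (H : Matrix (Fin p ⊕ Fin q) (Fin p ⊕ Fin q) ℂ)
    (hH : H = Matrix.fromBlocks 1 0 0 (-1))
    (hg : Matrix.fromBlocks A B C D * H * (Matrix.fromBlocks A B C D).conjTranspose = H)
    (Z : Matrix (Fin p) (Fin q) ℂ)
    (hZ : (1 - Z.conjTranspose * Z).PosDef) :
    IsUnit (C * Z + D) ∧
    (fun v : (Fin p → ℂ) × (Fin q → ℂ) =>
        (A *ᵥ v.1 + B *ᵥ v.2, C *ᵥ v.1 + D *ᵥ v.2)) ''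
      {v | ∃ w, v = (Z *ᵥ w, w)} =
      {v | ∃ w, v = (((A * Z + B) * (C * Z + D)⁻¹) *ᵥ w, w)} ∧
    (1 - ((A * Z + B) * (C * Z + D)⁻¹).conjTranspose *
        ((A * Z + B) * (C * Z + D)⁻¹)).PosDef := by
  subst hH
  set g := Matrix.fromBlocks A B C D with hgdef
  have hH2 : (Matrix.fromBlocks 1 0 0 (-1) : Matrix (Fin p ⊕ Fin q) (Fin p ⊕ Fin q) ℂ) *
      Matrix.fromBlocks 1 0 0 (-1) = 1 := by
    rw [fromBlocks_multiply]
    simp [← fromBlocks_one]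
  have h1 : g * (Matrix.fromBlocks 1 0 0 (-1) * gᴴ * Matrix.fromBlocks 1 0 0 (-1)) = 1 := by
    rw [← Matrix.mul_assoc, ← Matrix.mul_assoc, hg, hH2]
  have h2 := mul_eq_one_comm.mp h1
  have hg' : gᴴ * Matrix.fromBlocks 1 0 0 (-1) * g = Matrix.fromBlocks 1 0 0 (-1) := by
    calc gᴴ * Matrix.fromBlocks 1 0 0 (-1) * g
        = Matrix.fromBlocks 1 0 0 (-1) * (Matrix.fromBlocks 1 0 0 (-1) * gᴴ *
            Matrix.fromBlocks 1 0 0 (-1) * g) := by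
          rw [← Matrix.mul_assoc, ← Matrix.mul_assoc, ← Matrix.mul_assoc, hH2, Matrix.one_mul]
      _ = Matrix.fromBlocks 1 0 0 (-1) := by rw [h2, Matrix.mul_one]
  rw [hgdef, fromBlocks_conjTranspose, fromBlocks_multiply, fromBlocks_multiply] at hg'
  have h11 := congrArg Matrix.toBlocks₁₁ hg'
  have h12 := congrArg Matrix.toBlocks₁₂ hg'
  have h21 := congrArg Matrix.toBlocks₂₁ hg'
  have h22 := congrArg Matrix.toBlocks₂₂ hg'
  simp only [Matrix.toBlocks_fromBlocks₁₁, Matrix.toBlocks_fromBlocks₁₂,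
    Matrix.toBlocks_fromBlocks₂₁, Matrix.toBlocks_fromBlocks₂₂] at h11 h12 h21 h22
  simp at h11 h12 h21 h22
  rw [← sub_eq_add_neg] at h11 h12 h21 h22
  -- key identity
  set N := A * Z + B with hN
  set M := C * Z + D with hM
  have key : Mᴴ * M - Nᴴ * N = 1 - Zᴴ * Z := by
    have expand : Mᴴ * M - Nᴴ * N =
        -(Zᴴ * (Aᴴ * A - Cᴴ * C) * Z) - Zᴴ * (Aᴴ * B - Cᴴ * D) - (Bᴴ * A - Dᴴ * C) * Z -
          (Bᴴ * B - Dᴴ * D) := by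
      rw [hM, hN]
      simp only [conjTranspose_add, conjTranspose_mul, Matrix.add_mul, Matrix.mul_add,
        Matrix.sub_mul, Matrix.mul_sub, Matrix.mul_assoc, Matrix.mul_one, Matrix.one_mul]
      abel
    rw [expand, h11, h12, h21, h22]
    simp only [Matrix.mul_one, Matrix.mul_zero, Matrix.zero_mul, sub_zero, zero_mul]
    abel
  have hNN : (Nᴴ * N).PosSemidef := Matrix.posSemidef_conjTranspose_mul_self N
  have hMM : (Mᴴ * M).PosDef := by
    have : Mᴴ * M = (1 - Zᴴ * Z) + Nᴴ * N := by
      rw [← key]; noncomm_ring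
    rw [this]
    exact hZ.add_posSemidef hNN
  have hMunit : IsUnit M := by
    rw [Matrix.isUnit_iff_isUnit_det]
    have hdet : IsUnit (Mᴴ * M).det := Matrix.isUnit_iff_isUnit_det _ |>.mp hMM.isUnit
    rw [Matrix.det_mul] at hdet
    exact isUnit_of_mul_isUnit_right hdet
  have hdetM : IsUnit M.det := Matrix.isUnit_iff_isUnit_det _ |>.mp hMunit
  have hMinv : M * M⁻¹ = 1 := Matrix.mul_nonsing_inv M hdetM
  have hinvM : M⁻¹ * M = 1 := Matrix.nonsing_inv_mul M hdetM
  refine ⟨hMunit, ?_, ?_⟩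
  · ext v
    simp only [Set.mem_image, Set.mem_setOf_eq]
    constructor
    · rintro ⟨_, ⟨w, rfl⟩, rfl⟩
      refine ⟨M *ᵥ w, ?_⟩
      have hx : A *ᵥ (Z *ᵥ w) + B *ᵥ w = N *ᵥ w := by
        rw [hN, Matrix.add_mulVec, Matrix.mulVec_mulVec]
      have hy : C *ᵥ (Z *ᵥ w) + D *ᵥ w = M *ᵥ w := by
        rw [hM, Matrix.add_mulVec, Matrix.mulVec_mulVec]
      simp only [hx, hy]
      congr 1
      rw [Matrix.mulVec_mulVec, Matrix.mul_assoc, hinvM, Matrix.mul_one]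
    · rintro ⟨w, rfl⟩
      refine ⟨(Z *ᵥ (M⁻¹ *ᵥ w), M⁻¹ *ᵥ w), ⟨M⁻¹ *ᵥ w, rfl⟩, ?_⟩
      have hx : A *ᵥ (Z *ᵥ (M⁻¹ *ᵥ w)) + B *ᵥ (M⁻¹ *ᵥ w) = (N * M⁻¹) *ᵥ w := by
        simp only [Matrix.mulVec_mulVec]
        rw [← Matrix.add_mulVec]
        congr 1
        rw [hN, Matrix.add_mul, Matrix.mul_assoc]
      have hy : C *ᵥ (Z *ᵥ (M⁻¹ *ᵥ w)) + D *ᵥ (M⁻¹ *ᵥ w) = w := by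
        simp only [Matrix.mulVec_mulVec]
        rw [← Matrix.add_mulVec]
        have h1 : C * (Z * M⁻¹) + D * M⁻¹ = 1 := by
          rw [← Matrix.mul_assoc, ← Matrix.add_mul, ← hM, hMinv]
        rw [h1, Matrix.one_mulVec]
      simp only [hx, hy]
  · have hinj : Function.Injective (M⁻¹).mulVec :=
      Matrix.mulVec_injective_iff_isUnit.mpr (Matrix.isUnit_nonsing_inv_iff.mpr hMunit)
    have hconj : ((M⁻¹)ᴴ * (1 - Zᴴ * Z) * M⁻¹).PosDef := posdef_conj hZ hinj
    have heq : (M⁻¹)ᴴ * (1 - Zᴴ * Z) * M⁻¹ = 1 - (N * M⁻¹)ᴴ * (N * M⁻¹) := by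
      rw [← key]
      have hMH : (M⁻¹)ᴴ * Mᴴ = 1 := by
        rw [← Matrix.conjTranspose_mul, hMinv, Matrix.conjTranspose_one]
      calc (M⁻¹)ᴴ * (Mᴴ * M - Nᴴ * N) * M⁻¹
          = ((M⁻¹)ᴴ * Mᴴ) * (M * M⁻¹) - ((M⁻¹)ᴴ * Nᴴ) * (N * M⁻¹) := by
            simp only [Matrix.mul_sub, Matrix.sub_mul, Matrix.mul_assoc]
        _ = 1 - (N * M⁻¹)ᴴ * (N * M⁻¹) := by
            rw [hMH, hMinv, Matrix.one_mul, Matrix.conjTranspose_mul]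
    rw [heq] at hconj
    exact hconj
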